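/- Let u ∈ L¹(ℝ⁺; W^{1,∞}(ℝ³)) be a time-dependent vector field with ∫₀^∞ ‖∇u(s)‖_∞ ds ≤ δ < 1, and let X(t;0,x,v) be the solution of Ẋ = V, V̇ = u(t,X) − V with X(0)=x, V(0)=v. Then for every t ≥ 0 and every (x,v), the spatial Jacobian satisfies ‖D_x X(t;0,x,v)‖ ≤ 1/(1−δ), and similarly ‖D_v X(t;0,x,v)‖ ≤ 1/(1−δ). -/

import Mathlib

open MeasureTheory Set

abbrev E3 := EuclideanSpace ℝ (Fin 3)

/-- Key Lipschitz estimate for the flow. -/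
lemma flow_lipschitz (u : ℝ → E3 → E3) (K : ℝ → ℝ) (δ : ℝ) (hδ : δ < 1)
    (hK0 : ∀ t, 0 ≤ K t)
    (hLip : ∀ t x y, ‖u t x - u t y‖ ≤ K t * ‖x - y‖)
    (hKint : IntegrableOn K (Ioi (0:ℝ)))
    (hKδ : ∫ t in Ioi (0:ℝ), K t ≤ δ)
    (X V : ℝ → E3 → E3 → E3)
    (hX0 : ∀ x v, X 0 x v = x) (hV0 : ∀ x v, V 0 x v = v)
    (hXd : ∀ x v, ∀ t ≥ (0:ℝ), HasDerivAt (fun s => X s x v) (V t x v) t)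
    (hVd : ∀ x v, ∀ t ≥ (0:ℝ), HasDerivAt (fun s => V s x v) (u t (X t x v) - V t x v) t)
    (x v y w : E3) :
    ∀ T ≥ (0:ℝ), ‖X T x v - X T y w‖ ≤ (‖x - y‖ + ‖v - w‖) / (1 - δ) := by
  intro T hT
  have h1δ : (0:ℝ) < 1 - δ := by linarith
  set P : ℝ → E3 := fun t => X t x v - X t y w with hP
  set Q : ℝ → E3 := fun t => V t x v - V t y w with hQ
  set R : ℝ → E3 := fun t => u t (X t x v) - u t (X t y w) with hRdef
  have hP0 : P 0 = x - y := by simp [hP, hX0]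
  have hQ0 : Q 0 = v - w := by simp [hQ, hV0]
  have hP' : ∀ t ≥ (0:ℝ), HasDerivAt P (Q t) t := fun t ht =>
    (hXd x v t ht).sub (hXd y w t ht)
  have hQ' : ∀ t ≥ (0:ℝ), HasDerivAt Q (R t - Q t) t := by
    intro t ht
    have := (hVd x v t ht).sub (hVd y w t ht)
    convert this using 1
    · rfl
    · rfl
    · rfl
    · rfl
    simp only [hRdef, hQ]
    abel
  have hRle : ∀ t, ‖R t‖ ≤ K t * ‖P t‖ := fun t => hLip t _ _
  have contP : ContinuousOn P (Ici 0) := fun s hs =>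
    ((hP' s hs).continuousAt).continuousWithinAt
  have contQ : ContinuousOn Q (Ici 0) := fun s hs =>
    ((hQ' s hs).continuousAt).continuousWithinAt
  -- maximum of ‖P‖ on [0, T]
  obtain ⟨t0, ht0, hmax⟩ := isCompact_Icc.exists_isMaxOn (α := ℝ)
    (s := Icc (0:ℝ) T) ⟨0, le_refl 0, hT⟩
    ((contP.mono (Icc_subset_Ici_self)).norm)
  set M : ℝ := ‖P t0‖ with hMdef
  have hM0 : 0 ≤ M := norm_nonneg _
  have hM : ∀ s ∈ Icc (0:ℝ) T, ‖P s‖ ≤ M := fun s hs => hmax hs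
  set A : ℝ := ‖x - y‖ + ‖v - w‖ with hA
  -- integral of K over [0,t] is at most δ
  have hKt : ∀ t ∈ Icc (0:ℝ) T, ∫ s in (0:ℝ)..t, K s ≤ δ := by
    intro t ht
    rw [intervalIntegral.integral_of_le ht.1]
    refine le_trans ?_ hKδ
    refine setIntegral_mono_set hKint ?_ ?_
    · exact Filter.Eventually.of_forall fun s => hK0 s
    · exact Filter.Eventually.of_forall fun s hs => hs.1
  -- key claim via Duhamel formula
  have claim : ∀ t ∈ Icc (0:ℝ) T, ‖P t‖ ≤ A + δ * M := by
    intro t ht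
    have ht0' : (0:ℝ) ≤ t := ht.1
    -- measurability of R on (0, t]
    have measR : AEStronglyMeasurable R (volume.restrict (Ioc (0:ℝ) t)) := by
      have h1 : AEStronglyMeasurable (fun s => deriv Q s + Q s)
          (volume.restrict (Ioc (0:ℝ) t)) := by
        refine ((stronglyMeasurable_deriv Q).aestronglyMeasurable.restrict).add ?_
        exact (contQ.mono fun s hs => le_of_lt hs.1).aestronglyMeasurable measurableSet_Ioc
      refine h1.congr ?_
      refine (ae_restrict_iff' measurableSet_Ioc).2 (Filter.Eventually.of_forall ?_)
      intro s hs
      have hd := (hQ' s (le_of_lt hs.1)).deriv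
      show deriv Q s + Q s = R s
      rw [hd]; abel
    have hKM : IntegrableOn (fun s => K s * M) (Ioc (0:ℝ) t) :=
      (hKint.mono_set Ioc_subset_Ioi_self).mul_const M
    have hbound : ∀ s ∈ Ioc (0:ℝ) t, ‖R s‖ ≤ K s * M := by
      intro s hs
      exact le_trans (hRle s) (mul_le_mul_of_nonneg_left
        (hM s ⟨le_of_lt hs.1, le_trans hs.2 ht.2⟩) (hK0 s))
    have intR : IntegrableOn R (Ioc (0:ℝ) t) := by
      refine hKM.mono' measR ?_
      exact (ae_restrict_iff' measurableSet_Ioc).2 (Filter.Eventually.of_forall hbound)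
    have intRI : IntervalIntegrable R volume 0 t :=
      (intervalIntegrable_iff_integrableOn_Ioc_of_le ht0').2 intR
    have intR2 : IntervalIntegrable (fun s => Real.exp s • R s) volume 0 t := by
      refine (intervalIntegrable_iff_integrableOn_Ioc_of_le ht0').2 ?_
      refine (hKM.mul_const (Real.exp t)).mono'
        ((Real.continuous_exp.aestronglyMeasurable.restrict).smul measR) ?_
      refine (ae_restrict_iff' measurableSet_Ioc).2 (Filter.Eventually.of_forall ?_)
      intro s hs
      rw [norm_smul, Real.norm_eq_abs, abs_of_pos (Real.exp_pos s)]
      calc Real.exp s * ‖R s‖ ≤ Real.exp t * (K s * M) := by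
            refine mul_le_mul (Real.exp_le_exp.2 hs.2) (hbound s hs) (norm_nonneg _)
              (le_of_lt (Real.exp_pos t))
        _ = K s * M * Real.exp t := by ring
    have intR3 : IntervalIntegrable (fun s => (1 - Real.exp (s - t)) • R s) volume 0 t := by
      refine (intervalIntegrable_iff_integrableOn_Ioc_of_le ht0').2 ?_
      refine hKM.mono'
        (((continuous_const.sub (Real.continuous_exp.comp
          (continuous_id.sub continuous_const))).aestronglyMeasurable.restrict).smul measR) ?_
      refine (ae_restrict_iff' measurableSet_Ioc).2 (Filter.Eventually.of_forall ?_)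
      intro s hs
      rw [norm_smul, Real.norm_eq_abs]
      have he1 : Real.exp (s - t) ≤ 1 := Real.exp_le_one_iff.2 (by linarith [hs.2])
      have he0 : 0 < Real.exp (s - t) := Real.exp_pos _
      calc |1 - Real.exp (s - t)| * ‖R s‖ ≤ 1 * (K s * M) := by
            refine mul_le_mul ?_ (hbound s hs) (norm_nonneg _) zero_le_one
            rw [abs_of_nonneg (by linarith)]; linarith
        _ = K s * M := one_mul _
    -- FTC identities
    have FTC1 : ∫ s in (0:ℝ)..t, R s = (P t + Q t) - (P 0 + Q 0) := by
      refine intervalIntegral.integral_eq_sub_of_hasDerivAt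
        (f := fun s => P s + Q s) ?_ intRI
      intro s hs
      rw [uIcc_of_le ht0'] at hs
      have := (hP' s hs.1).add (hQ' s hs.1)
      convert this using 1
      · rfl
      abel
    have FTC2 : ∫ s in (0:ℝ)..t, Real.exp s • R s
        = Real.exp t • Q t - Real.exp 0 • Q 0 := by
      refine intervalIntegral.integral_eq_sub_of_hasDerivAt
        (f := fun s => Real.exp s • Q s) ?_ intR2
      intro s hs
      rw [uIcc_of_le ht0'] at hs
      have := (Real.hasDerivAt_exp s).smul (hQ' s hs.1)
      convert this using 1
      · rfl
      module
    have hsplit : ∫ s in (0:ℝ)..t, (1 - Real.exp (s - t)) • R s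
        = (∫ s in (0:ℝ)..t, R s) - Real.exp (-t) • ∫ s in (0:ℝ)..t, Real.exp s • R s := by
      have h2 : IntervalIntegrable (fun s => Real.exp (-t) • (Real.exp s • R s))
          volume 0 t := intR2.smul (Real.exp (-t))
      rw [← intervalIntegral.integral_smul, ← intervalIntegral.integral_sub intRI h2]
      refine intervalIntegral.integral_congr ?_
      intro s _
      show (1 - Real.exp (s - t)) • R s = R s - Real.exp (-t) • Real.exp s • R s
      have hst : s - t = -t + s := by ring
      rw [hst, smul_smul, ← Real.exp_add, sub_smul, one_smul]
    have hPt : P t = P 0 + (1 - Real.exp (-t)) • Q 0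
        + ∫ s in (0:ℝ)..t, (1 - Real.exp (s - t)) • R s := by
      rw [hsplit, FTC1, FTC2]
      have h1 : Real.exp (-t) • (Real.exp t • Q t) = Q t := by
        rw [smul_smul, ← Real.exp_add, neg_add_cancel, Real.exp_zero, one_smul]
      rw [Real.exp_zero, one_smul, smul_sub (Real.exp (-t)) (Real.exp t • Q t) (Q 0),
        h1, sub_smul (1:ℝ) (Real.exp (-t)) (Q 0), one_smul]
      abel
    -- norm estimates
    have hInorm : ‖∫ s in (0:ℝ)..t, (1 - Real.exp (s - t)) • R s‖ ≤ δ * M := by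
      have habs : ‖∫ s in (0:ℝ)..t, (1 - Real.exp (s - t)) • R s‖
          ≤ |∫ s in (0:ℝ)..t, K s * M| := by
        refine intervalIntegral.norm_integral_le_abs_of_norm_le ?_
          ((intervalIntegrable_iff_integrableOn_Ioc_of_le ht0').2 hKM)
        rw [uIoc_of_le ht0']
        refine (ae_restrict_iff' measurableSet_Ioc).2 (Filter.Eventually.of_forall ?_)
        intro s hs
        rw [norm_smul, Real.norm_eq_abs]
        have he1 : Real.exp (s - t) ≤ 1 := Real.exp_le_one_iff.2 (by linarith [hs.2])
        have he0 : 0 < Real.exp (s - t) := Real.exp_pos _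
        calc |1 - Real.exp (s - t)| * ‖R s‖ ≤ 1 * (K s * M) := by
              refine mul_le_mul ?_ (hbound s hs) (norm_nonneg _) zero_le_one
              rw [abs_of_nonneg (by linarith)]; linarith
          _ = K s * M := one_mul _
      have hnn : 0 ≤ ∫ s in (0:ℝ)..t, K s * M :=
        intervalIntegral.integral_nonneg ht0' fun s _ => mul_nonneg (hK0 s) hM0
      rw [abs_of_nonneg hnn] at habs
      refine le_trans habs ?_
      rw [intervalIntegral.integral_mul_const]
      exact mul_le_mul_of_nonneg_right (hKt t ht) hM0
    have hQ0norm : ‖(1 - Real.exp (-t)) • Q 0‖ ≤ ‖v - w‖ := by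
      rw [hQ0, norm_smul, Real.norm_eq_abs]
      have he1 : Real.exp (-t) ≤ 1 := Real.exp_le_one_iff.2 (by linarith)
      have he0 : 0 < Real.exp (-t) := Real.exp_pos _
      calc |1 - Real.exp (-t)| * ‖v - w‖ ≤ 1 * ‖v - w‖ := by
            refine mul_le_mul_of_nonneg_right ?_ (norm_nonneg _)
            rw [abs_of_nonneg (by linarith)]; linarith
        _ = ‖v - w‖ := one_mul _
    calc ‖P t‖ ≤ ‖P 0‖ + ‖(1 - Real.exp (-t)) • Q 0‖
          + ‖∫ s in (0:ℝ)..t, (1 - Real.exp (s - t)) • R s‖ := by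
          rw [hPt]; exact norm_add₃_le
      _ ≤ ‖x - y‖ + ‖v - w‖ + δ * M := by
          rw [hP0]
          exact add_le_add (add_le_add le_rfl hQ0norm) hInorm
      _ = A + δ * M := rfl
  -- Gronwall-type conclusion
  have hMA : M ≤ A / (1 - δ) := by
    have := claim t0 ht0
    rw [← hMdef] at this
    rw [le_div_iff₀ h1δ]
    nlinarith
  have : ‖P T‖ ≤ M := hM T ⟨hT, le_refl T⟩
  exact le_trans this hMA

/-- Jacobian bounds for the characteristic flow of `Ẋ = V`, `V̇ = u(t,X) − V`: if the
Lipschitz constants `K t` of `u(t,·)` satisfy `∫₀^∞ K ≤ δ < 1`, then the spatial and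
velocity Jacobians of `X(t;0,·,·)` are bounded by `1/(1−δ)` for all `t ≥ 0`. -/
theorem stmt7 (u : ℝ → E3 → E3) (K : ℝ → ℝ) (δ : ℝ) (hδ : δ < 1)
    (hK0 : ∀ t, 0 ≤ K t)
    (hLip : ∀ t x y, ‖u t x - u t y‖ ≤ K t * ‖x - y‖)
    (hKint : IntegrableOn K (Ioi (0:ℝ)))
    (hKδ : ∫ t in Ioi (0:ℝ), K t ≤ δ)
    (X V : ℝ → E3 → E3 → E3)
    (hX0 : ∀ x v, X 0 x v = x) (hV0 : ∀ x v, V 0 x v = v)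
    (hXd : ∀ x v, ∀ t ≥ (0:ℝ), HasDerivAt (fun s => X s x v) (V t x v) t)
    (hVd : ∀ x v, ∀ t ≥ (0:ℝ), HasDerivAt (fun s => V s x v) (u t (X t x v) - V t x v) t)
    (DxX DvX : ℝ → E3 → E3 → (E3 →L[ℝ] E3))
    (hDx : ∀ t ≥ (0:ℝ), ∀ x v, HasFDerivAt (fun y => X t y v) (DxX t x v) x)
    (hDv : ∀ t ≥ (0:ℝ), ∀ x v, HasFDerivAt (fun w => X t x w) (DvX t x v) v) :
    ∀ t ≥ (0:ℝ), ∀ x v, ‖DxX t x v‖ ≤ 1 / (1 - δ) ∧ ‖DvX t x v‖ ≤ 1 / (1 - δ) := by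
  intro t ht x v
  have h1δ : (0:ℝ) < 1 - δ := by linarith
  have hC : (0:ℝ) ≤ 1 / (1 - δ) := by positivity
  have key := flow_lipschitz u K δ hδ hK0 hLip hKint hKδ X V hX0 hV0 hXd hVd
  constructor
  · refine (hDx t ht x v).le_of_lip' hC ?_
    refine Filter.Eventually.of_forall fun y => ?_
    have := key y v x v t ht
    rw [sub_self, norm_zero, add_zero, div_eq_mul_one_div, mul_comm] at this
    exact this
  · refine (hDv t ht x v).le_of_lip' hC ?_
    refine Filter.Eventually.of_forall fun w => ?_
    have := key x w x v t ht
    rw [sub_self, norm_zero, zero_add, div_eq_mul_one_div, mul_comm] at this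
    exact this
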